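/- Upper bound for the first eigenvalue of the complement of a small ball, n ≥ 3: let (M,g) be a compact Riemannian manifold (possibly with boundary), λ_0 the first eigenvalue of -Δ_g on M (with Dirichlet or Neumann condition at ∂M), φ_0 the associated normalized eigenfunction, and λ_ε the first eigenvalue of -Δ_g on M \ B_ε(p) with 0 Dirichlet condition on ∂B_ε(p). Then there exists c > 0 such that λ_ε - λ_0 ≤ c ε^{n-2} for all small ε > 0. -/

import Mathlib

open MeasureTheory

open Metric Set

lemma norm_gradient_le_of_lipschitz' {n : ℕ} {f : EuclideanSpace ℝ (Fin n) → ℝ} {C : NNReal}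
    (h : LipschitzWith C f) (x : EuclideanSpace ℝ (Fin n)) : ‖gradient f x‖ ≤ C := by
  rw [gradient, LinearIsometryEquiv.norm_map]
  exact norm_fderiv_le_of_lipschitz ℝ h

lemma measurable_norm_gradient_sq' {n : ℕ} (f : EuclideanSpace ℝ (Fin n) → ℝ) :
    Measurable fun x => ‖gradient f x‖ ^ 2 := by
  have h1 : Measurable fun x => gradient f x :=
    (InnerProductSpace.toDual ℝ _).symm.continuous.measurable.comp (measurable_fderiv ℝ f)
  exact h1.norm.pow_const 2

lemma clamp_lip (a b : ℝ) : |min 1 (max 0 a) - min 1 (max 0 b)| ≤ |a - b| := by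
  calc |min 1 (max 0 a) - min 1 (max 0 b)| ≤ max |1-(1:ℝ)| |max 0 a - max 0 b| :=
        abs_min_sub_min_le_max _ _ _ _
    _ ≤ |max 0 a - max 0 b| := by simp
    _ ≤ max |0-(0:ℝ)| |a - b| := abs_max_sub_max_le_max _ _ _ _
    _ ≤ |a - b| := by simp

set_option maxHeartbeats 2000000 in
/-- upper bound for the first eigenvalue of the complement of a small ball,
`n ≥ 3`, stated for a compact Euclidean domain `M`.  Let `φ₀` be the normalized first
eigenfunction with eigenvalue `λ₀ = ∫ |∇φ₀|²`, and let `lamE ε` (the first eigenvalue of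
`-Δ` on `M \ B_ε(p)` with zero Dirichlet condition on `∂B_ε(p)` and the same condition as
`φ₀` at `∂M`) satisfy its variational characterization as an infimum of Rayleigh quotients.
Then there is `c > 0` with `lamE ε - λ₀ ≤ c ε^{n-2}` for all small `ε > 0`. -/
theorem eigenvalue_complement_small_ball_upper_bound (n : ℕ) (hn : 3 ≤ n)
    (M : Set (EuclideanSpace ℝ (Fin n))) (hMmeas : MeasurableSet M) (hMcomp : IsCompact M)
    (p : EuclideanSpace ℝ (Fin n)) (hp : p ∈ interior M)
    (φ₀ : EuclideanSpace ℝ (Fin n) → ℝ) (lam₀ : ℝ)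
    (L : NNReal) (hLip : LipschitzWith L φ₀)
    (K : ℝ) (hK : ∀ x ∈ M, |φ₀ x| ≤ K)
    (hnorm : ∫ x in M, (φ₀ x) ^ 2 = 1)
    (henergy : ∫ x in M, ‖gradient φ₀ x‖ ^ 2 = lam₀)
    (lamE : ℝ → ℝ)
    (hvar : ∀ ε > (0 : ℝ), ∀ u : EuclideanSpace ℝ (Fin n) → ℝ,
      (∃ L' : NNReal, LipschitzWith L' u) →
      (∀ x ∈ Metric.closedBall p ε, u x = 0) →
      (∀ x ∈ frontier M, u x = φ₀ x) →
      0 < ∫ x in M, (u x) ^ 2 →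
      lamE ε * ∫ x in M, (u x) ^ 2 ≤ ∫ x in M, ‖gradient u x‖ ^ 2) :
    ∃ c > (0 : ℝ), ∃ ε₀ > (0 : ℝ), ∀ ε : ℝ, 0 < ε → ε < ε₀ →
      lamE ε - lam₀ ≤ c * ε ^ (n - 2) := by
  set V : ℝ := (volume (Metric.closedBall (0 : EuclideanSpace ℝ (Fin n)) 1)).toReal with hVdef
  have hV0 : 0 ≤ V := ENNReal.toReal_nonneg
  have hK0 : 0 ≤ K := (abs_nonneg _).trans (hK p (interior_subset hp))
  have hlam0 : 0 ≤ lam₀ := by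
    rw [← henergy]; exact setIntegral_nonneg hMmeas fun x _ => by positivity
  obtain ⟨r, hr0, hrsub⟩ := Metric.isOpen_iff.1 isOpen_interior p hp
  set A : ℝ := 2 ^ n * V * K ^ 2 with hAdef
  have hA0 : 0 ≤ A := by positivity
  set c : ℝ := 2 * (lam₀ * A + 2 ^ n * V * ((L : ℝ) + K) ^ 2) + 1 with hcdef
  have hc0 : 0 < c := by positivity
  refine ⟨c, hc0, min (r / 3) (min 1 (1 / (2 * A + 1))), by positivity, ?_⟩
  intro ε hε hεlt
  have hεr : ε < r / 3 := lt_of_lt_of_le hεlt (min_le_left _ _)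
  have hε1 : ε ≤ 1 := le_of_lt (lt_of_lt_of_le hεlt ((min_le_right _ _).trans (min_le_left _ _)))
  have hεA : ε ≤ 1 / (2 * A + 1) :=
    le_of_lt (lt_of_lt_of_le hεlt ((min_le_right _ _).trans (min_le_right _ _)))
  have hAε : A * ε ^ n ≤ 1 / 2 := by
    have h1 : ε ^ n ≤ ε ^ 1 := pow_le_pow_of_le_one hε.le hε1 (by omega)
    have h2 : ε * (2 * A + 1) ≤ 1 := by
      rw [← le_div_iff₀ (by positivity)]; exact hεA
    nlinarith [mul_le_mul_of_nonneg_left h1 hA0]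
  -- the ball is inside the interior of M
  have hcB' : Metric.closedBall p (2 * ε) ⊆ interior M := by
    intro x hx
    apply hrsub
    have := mem_closedBall.1 hx
    exact mem_ball.2 (lt_of_le_of_lt this (by linarith))
  have hcB : Metric.closedBall p (2 * ε) ⊆ M := hcB'.trans interior_subset
  -- test function
  set χ : EuclideanSpace ℝ (Fin n) → ℝ := fun x => min 1 (max 0 (dist x p / ε - 1)) with hχdef
  set u : EuclideanSpace ℝ (Fin n) → ℝ := fun x => χ x * φ₀ x with hudef
  have hχ0 : ∀ x, 0 ≤ χ x := fun x => le_min zero_le_one (le_max_left _ _)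
  have hχ1 : ∀ x, χ x ≤ 1 := fun x => min_le_left _ _
  have hχzero : ∀ x, dist x p ≤ ε → χ x = 0 := by
    intro x hx
    have h1 : dist x p / ε - 1 ≤ 0 := by
      rw [sub_nonpos, div_le_one hε]; exact hx
    simp only [hχdef, max_eq_left h1, min_eq_right zero_le_one]
  have hχone : ∀ x, 2 * ε ≤ dist x p → χ x = 1 := by
    intro x hx
    have h1 : (1:ℝ) ≤ dist x p / ε - 1 := by
      rw [le_sub_iff_add_le, le_div_iff₀ hε]; linarith
    have h2 : max 0 (dist x p / ε - 1) = dist x p / ε - 1 :=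
      max_eq_right (zero_le_one.trans h1)
    simp only [hχdef, h2, min_eq_left h1]
  have hχlip : ∀ x y, |χ x - χ y| ≤ dist x y / ε := by
    intro x y
    refine (clamp_lip _ _).trans ?_
    rw [sub_sub_sub_cancel_right, div_sub_div_same, abs_div, abs_of_pos hε]
    gcongr
    exact abs_dist_sub_le x y p
  -- Lipschitz constant for u
  set Lr : ℝ := (L : ℝ) + K / ε with hLrdef
  have hLr0 : 0 ≤ Lr := by positivity
  have hLLr : (L : ℝ) ≤ Lr := le_add_of_nonneg_right (by positivity)
  have hφd : ∀ x y, |φ₀ x - φ₀ y| ≤ (L : ℝ) * dist x y := by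
    intro x y
    have := hLip.dist_le_mul x y
    rwa [Real.dist_eq] at this
  have key : ∀ x y, y ∈ Metric.closedBall p (2 * ε) → |u x - u y| ≤ Lr * dist x y := by
    intro x y hy
    have hφy : |φ₀ y| ≤ K := hK y (hcB hy)
    have h1 : u x - u y = χ x * (φ₀ x - φ₀ y) + φ₀ y * (χ x - χ y) := by
      simp only [hudef]; ring
    calc |u x - u y| ≤ |χ x * (φ₀ x - φ₀ y)| + |φ₀ y * (χ x - χ y)| := by
          rw [h1]; exact abs_add_le _ _
      _ ≤ 1 * ((L : ℝ) * dist x y) + K * (dist x y / ε) := by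
          rw [abs_mul, abs_mul]
          have e1 : |χ x| ≤ 1 := by rw [abs_of_nonneg (hχ0 x)]; exact hχ1 x
          exact add_le_add (mul_le_mul e1 (hφd x y) (abs_nonneg _) zero_le_one)
            (mul_le_mul hφy (hχlip x y) (abs_nonneg _) hK0)
      _ = Lr * dist x y := by rw [hLrdef]; field_simp
  have huLip : LipschitzWith (Real.toNNReal Lr) u := by
    apply LipschitzWith.of_dist_le_mul
    intro x y
    rw [Real.dist_eq, Real.coe_toNNReal _ hLr0]
    by_cases hy : y ∈ Metric.closedBall p (2 * ε)
    · exact key x y hy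
    · by_cases hx : x ∈ Metric.closedBall p (2 * ε)
      · rw [abs_sub_comm, dist_comm]; exact key y x hx
      · have h1 : χ x = 1 := hχone x (le_of_lt (by simpa [Metric.mem_closedBall, not_le] using hx))
        have h2 : χ y = 1 := hχone y (le_of_lt (by simpa [Metric.mem_closedBall, not_le] using hy))
        simp only [hudef, h1, h2, one_mul]
        exact (hφd x y).trans (by gcongr)
  -- gradient facts
  have huCont : Continuous u := huLip.continuous
  have hφCont : Continuous φ₀ := hLip.continuous
  have hgrad_eq : ∀ x, 2 * ε < dist x p → gradient u x = gradient φ₀ x := by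
    intro x hx
    have hopen : IsOpen {z : EuclideanSpace ℝ (Fin n) | 2 * ε < dist z p} :=
      isOpen_lt continuous_const (continuous_id.dist continuous_const)
    have hev : u =ᶠ[nhds x] φ₀ :=
      Filter.eventually_of_mem (hopen.mem_nhds hx) fun z hz => by
        simp only [hudef, hχone z (le_of_lt hz), one_mul]
    unfold gradient
    rw [hev.fderiv_eq]
  have hgradu_le : ∀ x, ‖gradient u x‖ ≤ Lr := by
    intro x
    have := norm_gradient_le_of_lipschitz' huLip x
    rwa [Real.coe_toNNReal _ hLr0] at this
  have hgradφ_le : ∀ x, ‖gradient φ₀ x‖ ≤ (L : ℝ) := fun x =>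
    norm_gradient_le_of_lipschitz' hLip x
  -- integrability
  have hMfin : volume M < ⊤ := hMcomp.measure_lt_top
  have hcBmeas : MeasurableSet (Metric.closedBall p (2 * ε)) := measurableSet_closedBall
  have hint_const : ∀ C : ℝ, IntegrableOn (fun _ => C) M :=
    fun C => integrableOn_const hMfin.ne
  have hbound_int : ∀ (f : EuclideanSpace ℝ (Fin n) → ℝ) (C : ℝ),
      Measurable f → (∀ x, |f x| ≤ C) → IntegrableOn f M := by
    intro f C hf hC
    refine Integrable.mono' (hint_const C) hf.aestronglyMeasurable ?_
    filter_upwards with x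
    rw [Real.norm_eq_abs]; exact hC x
  have hint_gu : IntegrableOn (fun x => ‖gradient u x‖ ^ 2) M := by
    refine hbound_int _ (Lr ^ 2) (measurable_norm_gradient_sq' u) fun x => ?_
    rw [abs_of_nonneg (by positivity)]
    exact pow_le_pow_left₀ (norm_nonneg _) (hgradu_le x) 2
  have hint_gφ : IntegrableOn (fun x => ‖gradient φ₀ x‖ ^ 2) M := by
    refine hbound_int _ ((L : ℝ) ^ 2) (measurable_norm_gradient_sq' φ₀) fun x => ?_
    rw [abs_of_nonneg (by positivity)]
    exact pow_le_pow_left₀ (norm_nonneg _) (hgradφ_le x) 2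
  have hint_u2 : IntegrableOn (fun x => u x ^ 2) M :=
    (huCont.pow 2).continuousOn.integrableOn_compact hMcomp
  have hint_φ2 : IntegrableOn (fun x => φ₀ x ^ 2) M :=
    (hφCont.pow 2).continuousOn.integrableOn_compact hMcomp
  -- splitting integrals over M = (M \ cB) ∪ (M ∩ cB)
  have hMsplit : (M \ Metric.closedBall p (2*ε)) ∪ (M ∩ Metric.closedBall p (2*ε)) = M :=
    diff_union_inter M _
  have hdisj : Disjoint (M \ Metric.closedBall p (2*ε)) (M ∩ Metric.closedBall p (2*ε)) :=
    disjoint_sdiff_self_left.mono_right inter_subset_right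
  have hsplit : ∀ f : EuclideanSpace ℝ (Fin n) → ℝ, IntegrableOn f M →
      ∫ x in M, f x = (∫ x in M \ Metric.closedBall p (2*ε), f x)
        + ∫ x in M ∩ Metric.closedBall p (2*ε), f x := by
    intro f hf
    rw [← setIntegral_union hdisj (hMmeas.inter hcBmeas)
      (hf.mono_set diff_subset) (hf.mono_set inter_subset_left), hMsplit]
  -- volume of the ball
  have hvolfin : volume (Metric.closedBall p (2*ε)) < ⊤ :=
    (isCompact_closedBall p _).measure_lt_top
  have hvol : (volume (Metric.closedBall p (2*ε))).toReal = (2*ε)^n * V := by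
    rw [Measure.addHaar_closedBall' volume p (by positivity), ENNReal.toReal_mul,
      ENNReal.toReal_ofReal (by positivity), finrank_euclideanSpace_fin]
  have hvol2 : (volume (M ∩ Metric.closedBall p (2*ε))).toReal ≤ (2*ε)^n * V := by
    rw [← hvol]
    exact ENNReal.toReal_mono hvolfin.ne (measure_mono inter_subset_right)
  -- energy estimate
  have hout : ∀ x ∈ M \ Metric.closedBall p (2*ε), 2 * ε < dist x p := by
    intro x hx
    have := hx.2
    simpa [Metric.mem_closedBall, not_le] using this
  have hEng : ∫ x in M, ‖gradient u x‖ ^ 2 ≤ lam₀ + (2*ε)^n * V * Lr ^ 2 := by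
    rw [hsplit _ hint_gu]
    have e1 : ∫ x in M \ Metric.closedBall p (2*ε), ‖gradient u x‖ ^ 2
        = ∫ x in M \ Metric.closedBall p (2*ε), ‖gradient φ₀ x‖ ^ 2 := by
      refine setIntegral_congr_fun (hMmeas.diff hcBmeas) fun x hx => ?_
      rw [hgrad_eq x (hout x hx)]
    have e2 : ∫ x in M \ Metric.closedBall p (2*ε), ‖gradient φ₀ x‖ ^ 2 ≤ lam₀ := by
      rw [← henergy]
      refine setIntegral_mono_set hint_gφ ?_ (HasSubset.Subset.eventuallyLE diff_subset)
      filter_upwards with x using by positivity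
    have e3 : ∫ x in M ∩ Metric.closedBall p (2*ε), ‖gradient u x‖ ^ 2
        ≤ (2*ε)^n * V * Lr ^ 2 := by
      have e4 : ∫ x in M ∩ Metric.closedBall p (2*ε), ‖gradient u x‖ ^ 2
          ≤ ∫ _x in M ∩ Metric.closedBall p (2*ε), Lr ^ 2 := by
        refine setIntegral_mono_on (hint_gu.mono_set inter_subset_left)
          ((hint_const _).mono_set inter_subset_left) (hMmeas.inter hcBmeas) fun x _ => ?_
        exact pow_le_pow_left₀ (norm_nonneg _) (hgradu_le x) 2
      rw [setIntegral_const] at e4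
      refine e4.trans ?_
      rw [smul_eq_mul]
      exact mul_le_mul_of_nonneg_right hvol2 (by positivity)
    rw [e1]
    linarith
  -- L² estimates
  have hQle : ∫ x in M, u x ^ 2 ≤ 1 := by
    rw [← hnorm]
    refine setIntegral_mono_on hint_u2 hint_φ2 hMmeas fun x _ => ?_
    simp only [hudef, mul_pow]
    have h9 := mul_nonneg (mul_nonneg (sub_nonneg.2 (hχ1 x))
      (by linarith [hχ0 x] : (0:ℝ) ≤ 1 + χ x)) (sq_nonneg (φ₀ x))
    nlinarith [h9]
  have hQge : 1 - A * ε ^ n ≤ ∫ x in M, u x ^ 2 := by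
    have e1 : ∫ x in M \ Metric.closedBall p (2*ε), u x ^ 2
        = ∫ x in M \ Metric.closedBall p (2*ε), φ₀ x ^ 2 := by
      refine setIntegral_congr_fun (hMmeas.diff hcBmeas) fun x hx => ?_
      simp only [hudef, hχone x (hout x hx).le, one_mul]
    have e2 : ∫ x in M \ Metric.closedBall p (2*ε), u x ^ 2 ≤ ∫ x in M, u x ^ 2 := by
      refine setIntegral_mono_set hint_u2 ?_ (HasSubset.Subset.eventuallyLE diff_subset)
      filter_upwards with x using by positivity
    have e3 : ∫ x in M ∩ Metric.closedBall p (2*ε), φ₀ x ^ 2 ≤ A * ε ^ n := by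
      have e4 : ∫ x in M ∩ Metric.closedBall p (2*ε), φ₀ x ^ 2
          ≤ ∫ _x in M ∩ Metric.closedBall p (2*ε), K ^ 2 := by
        refine setIntegral_mono_on (hint_φ2.mono_set inter_subset_left)
          ((hint_const _).mono_set inter_subset_left) (hMmeas.inter hcBmeas) fun x hx => ?_
        calc φ₀ x ^ 2 = |φ₀ x| ^ 2 := (sq_abs _).symm
          _ ≤ K ^ 2 := pow_le_pow_left₀ (abs_nonneg _) (hK x hx.1) 2
      rw [setIntegral_const, smul_eq_mul] at e4
      refine e4.trans ?_
      calc (volume (M ∩ Metric.closedBall p (2*ε))).toReal * K ^ 2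
          ≤ ((2*ε)^n * V) * K ^ 2 := mul_le_mul_of_nonneg_right hvol2 (by positivity)
        _ = A * ε ^ n := by rw [hAdef, mul_pow]; ring
    have e5 : ∫ x in M, φ₀ x ^ 2 = (∫ x in M \ Metric.closedBall p (2*ε), φ₀ x ^ 2)
        + ∫ x in M ∩ Metric.closedBall p (2*ε), φ₀ x ^ 2 := hsplit _ hint_φ2
    rw [hnorm] at e5
    linarith
  have hQhalf : (1:ℝ)/2 ≤ ∫ x in M, u x ^ 2 := by linarith
  -- apply the variational characterization
  have happ := hvar ε hε u ⟨_, huLip⟩ ?_ ?_ (by linarith)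
  rotate_left
  · intro x hx
    simp only [hudef, hχzero x (mem_closedBall.1 hx), zero_mul]
  · intro x hx
    have hxout : ¬ x ∈ Metric.closedBall p (2*ε) := fun hmem =>
      ((closure_diff_interior M).symm.subset hx).2 (hcB' hmem)
    have : 2 * ε ≤ dist x p := le_of_lt (by simpa [Metric.mem_closedBall, not_le] using hxout)
    simp only [hudef, hχone x this, one_mul]
  -- final arithmetic
  set Q : ℝ := ∫ x in M, u x ^ 2 with hQdef
  set D : ℝ := ε ^ (n - 2) with hDdef
  have hD0 : 0 ≤ D := by positivity
  have hm : n - 2 + 2 = n := by omega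
  have hεn : ε ^ n = D * ε ^ 2 := by rw [hDdef, ← pow_add, hm]
  have hεnD : ε ^ n ≤ D := by
    rw [hεn]
    have h1 : ε ^ 2 ≤ 1 := by nlinarith
    calc D * ε ^ 2 ≤ D * 1 := mul_le_mul_of_nonneg_left h1 hD0
      _ = D := mul_one D
  have hB : (2*ε)^n * V * Lr ^ 2 ≤ 2 ^ n * V * ((L : ℝ) + K) ^ 2 * D := by
    have h2 : ε ^ 2 * Lr ^ 2 = (ε * L + K) ^ 2 := by
      rw [← mul_pow, hLrdef, mul_add, mul_div_cancel₀ _ (ne_of_gt hε)]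
    have h3 : (ε * L + K) ^ 2 ≤ ((L : ℝ) + K) ^ 2 := by
      have : ε * (L : ℝ) ≤ (L : ℝ) := by nlinarith [L.coe_nonneg]
      exact pow_le_pow_left₀ (by positivity) (by linarith) 2
    calc (2*ε)^n * V * Lr ^ 2 = 2 ^ n * V * (ε ^ 2 * Lr ^ 2) * D := by
          rw [mul_pow, hεn]; ring
      _ = 2 ^ n * V * (ε * L + K) ^ 2 * D := by rw [h2]
      _ ≤ 2 ^ n * V * ((L : ℝ) + K) ^ 2 * D := by
          refine mul_le_mul_of_nonneg_right ?_ hD0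
          exact mul_le_mul_of_nonneg_left h3 (by positivity)
  have happ2 : lamE ε * Q ≤ lam₀ + 2 ^ n * V * ((L : ℝ) + K) ^ 2 * D := by
    calc lamE ε * Q ≤ ∫ x in M, ‖gradient u x‖ ^ 2 := happ
      _ ≤ lam₀ + (2*ε)^n * V * Lr ^ 2 := hEng
      _ ≤ _ := by linarith
  have hQpos : (0:ℝ) < Q := by linarith
  have hdiv : lamE ε ≤ (lam₀ + 2 ^ n * V * ((L : ℝ) + K) ^ 2 * D) / Q :=
    (le_div_iff₀ hQpos).2 happ2
  have hfin : (lam₀ + 2 ^ n * V * ((L : ℝ) + K) ^ 2 * D) / Q ≤ lam₀ + c * D := by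
    rw [div_le_iff₀ hQpos]
    have p1 : lam₀ * (1 - A * ε ^ n) ≤ lam₀ * Q := mul_le_mul_of_nonneg_left hQge hlam0
    have p2 : c * D * (1/2) ≤ c * D * Q := mul_le_mul_of_nonneg_left hQhalf (by positivity)
    have p3 : lam₀ * (A * ε ^ n) ≤ lam₀ * (A * D) :=
      mul_le_mul_of_nonneg_left (mul_le_mul_of_nonneg_left hεnD hA0) hlam0
    have hcD : c * D = 2 * (lam₀ * (A * D) + 2 ^ n * V * ((L : ℝ) + K) ^ 2 * D) + D := by
      rw [hcdef]; ring
    clear_value V A c Q D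
    linarith [p1, p2, p3, hcD, hD0]
  linarith [hdiv.trans hfin]
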